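/- arXiv:1810.09787 — 2 statements merged into one kernel-verified Lean document; each statement's English description precedes it below -/
import Mathlib

section
/- Let t be the infinite tribonacci word and let z_C(n) count the indices j ≤ n with t(j)=2 (with z_C(−1)=0). Then the position B(n) of the (n+1)-st occurrence of 0 in t satisfies B(n) = 2n − z_C(n−1) for all n ≥ 0. -/
/-- The tribonacci substitution on letters: 0 ↦ 01, 1 ↦ 02, 2 ↦ 0. -/
def sigmaW : ℕ → List ℕ
  | 0 => [0, 1]
  | 1 => [0, 2]
  | _ => [0]

/-- The substitution extended to words (concatenation homomorphism). -/
def sigmaL (w : List ℕ) : List ℕ := w.flatMap sigmaW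

/-- The infinite tribonacci word t = 0,1,0,2,0,1,0,0,1,0,2,...,
the fixed point of the substitution starting from 0. -/
def t (n : ℕ) : ℕ := (sigmaL^[n + 1] [0]).getD n 0

/-- A(n): position of the (n+1)-st occurrence of the letter 1 in t. -/
noncomputable def A (n : ℕ) : ℕ := Nat.nth (fun k => t k = 1) n

/-- B(n): position of the (n+1)-st occurrence of the letter 0 in t. -/
noncomputable def B (n : ℕ) : ℕ := Nat.nth (fun k => t k = 0) n

/-- C(n): position of the (n+1)-st occurrence of the letter 2 in t. -/
noncomputable def C (n : ℕ) : ℕ := Nat.nth (fun k => t k = 2) n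

/- ### Auxiliary development -/

def W (k : ℕ) : List ℕ := sigmaL^[k] [0]

lemma sigmaL_append (u v : List ℕ) : sigmaL (u ++ v) = sigmaL u ++ sigmaL v := by
  simp [sigmaL]

lemma sigmaL_prefix {u v : List ℕ} (h : u <+: v) : sigmaL u <+: sigmaL v := by
  obtain ⟨w, rfl⟩ := h
  exact ⟨sigmaL w, (sigmaL_append u w).symm⟩

lemma W_succ (k : ℕ) : W (k + 1) = sigmaL (W k) :=
  Function.iterate_succ_apply' _ _ _

lemma W_prefix_succ (k : ℕ) : W k <+: W (k + 1) := by
  induction k with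
  | zero => exact ⟨[1], rfl⟩
  | succ k ih =>
    rw [W_succ, W_succ]
    exact sigmaL_prefix ih

lemma W_prefix {k m : ℕ} (h : k ≤ m) : W k <+: W m := by
  induction m with
  | zero => simpa [Nat.le_zero.mp h] using List.prefix_refl _
  | succ m ih =>
    rcases Nat.lt_or_ge k (m + 1) with h' | h'
    · exact (ih (Nat.lt_succ_iff.mp h')).trans (W_prefix_succ m)
    · have : k = m + 1 := le_antisymm h h'
      subst this; exact List.prefix_refl _

lemma length_sigmaL_ge (l : List ℕ) : l.length ≤ (sigmaL l).length := by
  induction l with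
  | nil => simp [sigmaL]
  | cons a l ih =>
    have h1 : 1 ≤ (sigmaW a).length := by
      match a with
      | 0 => simp [sigmaW]
      | 1 => simp [sigmaW]
      | n + 2 => simp [sigmaW]
    have hc : sigmaL (a :: l) = sigmaW a ++ sigmaL l := rfl
    rw [hc, List.length_append, List.length_cons]
    omega

lemma W_cons (k : ℕ) : ∃ tl, W k = 0 :: tl := by
  obtain ⟨w, hw⟩ := W_prefix (Nat.zero_le k)
  exact ⟨w, by simpa [W] using hw.symm⟩

lemma W_length (k : ℕ) : k + 1 ≤ (W k).length := by
  induction k with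
  | zero => simp [W]
  | succ k ih =>
    obtain ⟨tl, htl⟩ := W_cons k
    have h1 := length_sigmaL_ge tl
    have h2 : W (k + 1) = [0, 1] ++ sigmaL tl := by
      rw [W_succ, htl]; simp [sigmaL, List.flatMap_cons, sigmaW]
    have h3 : (W k).length = tl.length + 1 := by simp [htl]
    rw [h2]
    simp only [List.length_append, List.length_cons]
    omega

lemma t_eq {k n : ℕ} (h : n < (W k).length) : t n = (W k).getD n 0 := by
  have ht : t n = (W (n + 1)).getD n 0 := rfl
  rcases le_total k (n + 1) with hle | hle
  · obtain ⟨w, hw⟩ := W_prefix hle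
    rw [ht, ← hw, List.getD_append _ _ _ _ h]
  · obtain ⟨w, hw⟩ := W_prefix hle
    have hn : n < (W (n + 1)).length := by have := W_length (n + 1); omega
    rw [ht, ← hw] at *
    rw [List.getD_append _ _ _ _ hn]

lemma mem_sigmaW_le {a c : ℕ} (h : c ∈ sigmaW a) : c ≤ 2 := by
  match a with
  | 0 => simp [sigmaW] at h; omega
  | 1 => simp [sigmaW] at h; omega
  | n + 2 => simp [sigmaW] at h; omega

lemma mem_W_le {k a : ℕ} (h : a ∈ W k) : a ≤ 2 := by
  induction k generalizing a with
  | zero => simp [W] at h; omega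
  | succ k ih =>
    rw [W_succ] at h
    obtain ⟨b, _, hb⟩ := List.mem_flatMap.mp h
    exact mem_sigmaW_le hb

lemma t_le (n : ℕ) : t n ≤ 2 := by
  have hn : n < (W (n + 1)).length := by have := W_length (n + 1); omega
  have : t n = (W (n + 1)).getD n 0 := rfl
  rw [this, List.getD_eq_getElem _ _ hn]
  exact mem_W_le (List.getElem_mem hn)

lemma map_t_range {k n : ℕ} (h : n ≤ (W k).length) :
    List.map t (List.range n) = (W k).take n := by
  apply List.ext_getElem
  · simp; omega
  · intro i h1 h2
    simp only [List.length_map, List.length_range] at h1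
    have hi : i < (W k).length := lt_of_lt_of_le h1 h
    simp only [List.getElem_map, List.getElem_range, List.getElem_take]
    rw [t_eq hi, List.getD_eq_getElem _ _ hi]

/-- The image of the length-`n` prefix of `t`. -/
def Pfx (n : ℕ) : List ℕ := sigmaL (List.map t (List.range n))

def b (n : ℕ) : ℕ := (Pfx n).length

lemma Pfx_eq (n : ℕ) : Pfx n = List.map t (List.range (b n)) := by
  have h1 : n ≤ (W n).length := by have := W_length n; omega
  have h2 : Pfx n = sigmaL ((W n).take n) := by rw [Pfx, map_t_range h1]
  have hp : Pfx n <+: W (n + 1) := by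
    rw [h2, W_succ]
    exact sigmaL_prefix (List.take_prefix n (W n))
  obtain ⟨w, hw⟩ := hp
  have hl : b n ≤ (W (n + 1)).length := by
    rw [← hw]; simp [b]
  rw [map_t_range hl, ← hw, b, List.take_left]

lemma Pfx_succ (n : ℕ) : Pfx (n + 1) = Pfx n ++ sigmaW (t n) := by
  simp [Pfx, List.range_succ, sigmaL_append, sigmaL]

lemma b_succ (n : ℕ) : b (n + 1) = b n + (sigmaW (t n)).length := by
  simp [b, Pfx_succ]

lemma sigmaW_len {a : ℕ} (h : a ≤ 2) :
    (sigmaW a).length = 2 - (if a = 2 then 1 else 0) := by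
  interval_cases a <;> simp [sigmaW]

lemma sigmaW_head (a : ℕ) : (sigmaW a)[0]? = some 0 := by
  match a with
  | 0 => rfl
  | 1 => rfl
  | n + 2 => rfl

lemma b_add (n : ℕ) : b n + Nat.count (fun k => t k = 2) n = 2 * n := by
  induction n with
  | zero => simp [b, Pfx, sigmaL]
  | succ n ih =>
    rw [b_succ, Nat.count_succ, sigmaW_len (t_le n)]
    by_cases h : t n = 2 <;> simp [h] <;> omega

lemma t_b (n : ℕ) : t (b n) = 0 := by
  have key : List.map t (List.range (b (n + 1))) =
      List.map t (List.range (b n)) ++ sigmaW (t n) := by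
    rw [← Pfx_eq, Pfx_succ, Pfx_eq]
  have hlt : b n < b (n + 1) := by
    rw [b_succ]
    have hp : 1 ≤ (sigmaW (t n)).length := by
      match h : t n with
      | 0 => simp [sigmaW]
      | 1 => simp [sigmaW]
      | k + 2 => simp [sigmaW]
    omega
  have h1 : (List.map t (List.range (b (n + 1))))[b n]? = some (t (b n)) := by
    rw [List.getElem?_map, List.getElem?_range hlt]; rfl
  rw [key, List.getElem?_append_right (by simp)] at h1
  simp only [List.length_map, List.length_range, Nat.sub_self, sigmaW_head] at h1
  exact (Option.some_injective _ h1).symm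

lemma countP_zero_sigmaW (a : ℕ) : (sigmaW a).countP (fun x => x == 0) = 1 := by
  match a with
  | 0 => rfl
  | 1 => rfl
  | n + 2 => rfl

lemma countP_zero_sigmaL (l : List ℕ) :
    (sigmaL l).countP (fun x => x == 0) = l.length := by
  induction l with
  | nil => rfl
  | cons a l ih =>
    have : sigmaL (a :: l) = sigmaW a ++ sigmaL l := by
      simp [sigmaL, List.flatMap_cons]
    rw [this, List.countP_append, countP_zero_sigmaW, ih, List.length_cons]
    omega

lemma count_zeros (n : ℕ) : Nat.count (fun k => t k = 0) (b n) = n := by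
  have h1 : (Pfx n).countP (fun x => x == 0) = n := by
    rw [Pfx, countP_zero_sigmaL]; simp
  rw [Pfx_eq, List.countP_map] at h1
  unfold Nat.count
  refine Eq.trans ?_ h1
  exact List.countP_congr (fun x _ => by simp [Function.comp])

lemma B_eq (n : ℕ) : B n = b n := by
  have h := Nat.nth_count (p := fun k => t k = 0) (t_b n)
  rw [count_zeros] at h
  exact h

/-- B(n) = 2n − z_C(n−1), where z_C(n) counts indices j ≤ n with t(j)=2. -/
theorem B_formula (n : ℕ) :
    (B n : ℤ) = 2 * n - ((Finset.range n).filter (fun j => t j = 2)).card := by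
  have h1 := b_add n
  rw [Nat.count_eq_card_filter_range] at h1
  rw [B_eq]
  omega
end

section
/- For the tribonacci position sequences B and C (positions of 0 and 2 in the infinite tribonacci word), the composition B∘C satisfies B(C(k)) = 2C(k) − k for all k ≥ 0. -/
/-! ### Auxiliary lemmas -/

lemma sigmaL_cons (a : ℕ) (u : List ℕ) : sigmaL (a :: u) = sigmaW a ++ sigmaL u := rfl

lemma sigmaW_cases (a : ℕ) : sigmaW a = [0, 1] ∨ sigmaW a = [0, 2] ∨ sigmaW a = [0] := by
  match a with
  | 0 => exact Or.inl rfl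
  | 1 => exact Or.inr (Or.inl rfl)
  | (n+2) => exact Or.inr (Or.inr rfl)

lemma count0_sigmaL (u : List ℕ) : (sigmaL u).count 0 = u.length := by
  induction u with
  | nil => rfl
  | cons a u ih =>
    rw [sigmaL_cons, List.count_append, ih]
    rcases sigmaW_cases a with h | h | h <;> simp [h, List.count_cons] <;> omega

lemma count1_sigmaL (u : List ℕ) : (sigmaL u).count 1 = u.count 0 := by
  induction u with
  | nil => rfl
  | cons a u ih =>
    rw [sigmaL_cons, List.count_append, ih, List.count_cons]
    match a with
    | 0 => simp [sigmaW, List.count_cons]; omega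
    | 1 => simp [sigmaW, List.count_cons]
    | (n+2) => simp [sigmaW, List.count_cons]

lemma count2_sigmaL (u : List ℕ) (hu : ∀ x ∈ u, x < 3) : (sigmaL u).count 2 = u.count 1 := by
  induction u with
  | nil => rfl
  | cons a u ih =>
    have ha : a < 3 := hu a (by simp)
    rw [sigmaL_cons, List.count_append, ih (fun x hx => hu x (by simp [hx])), List.count_cons]
    interval_cases a <;> simp [sigmaW, List.count_cons] <;> omega

lemma len_sigmaL (u : List ℕ) (hu : ∀ x ∈ u, x < 3) :
    (sigmaL u).length + u.count 2 = 2 * u.length := by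
  induction u with
  | nil => rfl
  | cons a u ih =>
    have ha : a < 3 := hu a (by simp)
    have ih' := ih (fun x hx => hu x (by simp [hx]))
    rw [sigmaL_cons, List.length_append, List.count_cons]
    interval_cases a <;> simp [sigmaW] <;> omega

lemma mem_sigmaL_lt (u : List ℕ) : ∀ x ∈ sigmaL u, x < 3 := by
  induction u with
  | nil => simp [sigmaL]
  | cons a u ih =>
    intro x hx
    rw [sigmaL_cons, List.mem_append] at hx
    rcases hx with hx | hx
    · rcases sigmaW_cases a with h | h | h <;> rw [h] at hx <;> simp at hx <;> omega
    · exact ih x hx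

/-- The finite approximations. -/
def w (m : ℕ) : List ℕ := sigmaL^[m] [0]

lemma w_succ (m : ℕ) : w (m + 1) = sigmaL (w m) := Function.iterate_succ_apply' _ _ _

lemma w_lt (m : ℕ) : ∀ x ∈ w m, x < 3 := by
  induction m with
  | zero => simp [w]
  | succ m ih => rw [w_succ]; exact mem_sigmaL_lt _

lemma w_prefix_succ (m : ℕ) : w m <+: w (m + 1) := by
  induction m with
  | zero => exact ⟨[1], rfl⟩
  | succ m ih =>
    rw [w_succ, w_succ]
    obtain ⟨s, hs⟩ := ih
    exact ⟨sigmaL s, by rw [← sigmaL_append, hs]⟩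

lemma w_prefix {a b : ℕ} (h : a ≤ b) : w a <+: w b := by
  induction b with
  | zero => rw [Nat.le_zero.mp h]
  | succ b ih =>
    rcases Nat.lt_or_ge a (b + 1) with hb | hb
    · exact (ih (Nat.lt_succ_iff.mp hb)).trans (w_prefix_succ b)
    · rw [Nat.le_antisymm h hb]

lemma w_zero_mem (m : ℕ) : (0 : ℕ) ∈ w m := by
  obtain ⟨s, hs⟩ := w_prefix (Nat.zero_le m)
  rw [← hs]; simp [w, sigmaL]

lemma w_length (m : ℕ) : m + 1 ≤ (w m).length := by
  induction m with
  | zero => simp [w]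
  | succ m ih =>
    rw [w_succ]
    have h1 := len_sigmaL (w m) (w_lt m)
    have h2 : (w m).count 2 < (w m).length := by
      rcases Nat.lt_or_ge ((w m).count 2) (w m).length with h | h
      · exact h
      · have := List.count_le_length (a := 2) (l := w m)
        have heq : (w m).count 2 = (w m).length := le_antisymm this h
        rw [List.count_eq_length] at heq
        have := heq 0 (w_zero_mem m)
        omega
    omega

lemma getD_prefix {u v : List ℕ} (h : u <+: v) {n : ℕ} (hn : n < u.length) :
    v.getD n 0 = u.getD n 0 := by
  obtain ⟨s, hs⟩ := h
  rw [← hs, List.getD_eq_getElem?_getD, List.getD_eq_getElem?_getD,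
    List.getElem?_append_left hn]

lemma t_eq_s16 (m n : ℕ) (hn : n < (w m).length) : t n = (w m).getD n 0 := by
  have hself : n < (w (n + 1)).length := by have := w_length (n + 1); omega
  show (w (n+1)).getD n 0 = (w m).getD n 0
  rcases Nat.le_total m (n + 1) with h | h
  · rw [getD_prefix (w_prefix h) hn]
  · rw [getD_prefix (w_prefix h) hself]

lemma count_t_eq (c m : ℕ) : ∀ M, M ≤ (w m).length →
    Nat.count (fun k => t k = c) M = ((w m).take M).count c := by
  intro M
  induction M with
  | zero => simp
  | succ M ih =>
    intro hM
    have hM' : M < (w m).length := hM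
    rw [Nat.count_succ, ih (le_of_lt hM'),
      List.take_succ, List.getElem?_eq_getElem hM']
    have ht : t M = (w m)[M] := by
      rw [t_eq_s16 m M hM']
      simp [List.getD_eq_getElem?_getD, List.getElem?_eq_getElem hM']
    simp only [List.count_append, Option.toList_some, List.count_cons, List.count_nil]
    by_cases h : t M = c
    · simp [h, ← ht]
    · simp [h, ← ht]

/-- Key structural lemma: the (n+1)-st zero of t is at position
`(sigmaL ((w m).take n)).length` for suitable m, and `B n + count of 2's below n = 2n`. -/
lemma B_eq_s16 (n : ℕ) : B n + Nat.count (fun k => t k = 2) n = 2 * n := by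
  -- choose a large approximation word
  set m := 2 * n + 2 with hm
  have hlen : 2 * n + 3 ≤ (w m).length := w_length m
  have hn_lt : n < (w m).length := by omega
  set u := w m with hu
  set P : ℕ := (sigmaL (u.take n)).length with hP
  have hsplit : w (m + 1) = sigmaL (u.take n) ++ sigmaL (u.drop n) := by
    rw [w_succ, ← sigmaL_append, List.take_append_drop]
  -- length bound for P
  have htake_lt : ∀ x ∈ u.take n, x < 3 := fun x hx => w_lt m x (List.mem_of_mem_take hx)
  have hlenP : P + (u.take n).count 2 = 2 * n := by
    have := len_sigmaL (u.take n) htake_lt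
    rwa [List.length_take, min_eq_left (le_of_lt hn_lt)] at this
  -- the drop part is nonempty and its sigmaL starts with 0
  have hdrop : ∃ a s, u.drop n = a :: s := by
    cases hd : u.drop n with
    | nil => exfalso; have : (u.drop n).length = u.length - n := List.length_drop; rw [hd] at this; simp at this; omega
    | cons a s => exact ⟨a, s, rfl⟩
  obtain ⟨a, s, hds⟩ := hdrop
  have hsig_drop : ∃ r, sigmaL (u.drop n) = 0 :: r := by
    rw [hds, sigmaL_cons]
    rcases sigmaW_cases a with h | h | h <;> rw [h] <;> exact ⟨_, rfl⟩
  obtain ⟨r, hr⟩ := hsig_drop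
  have hP_lt : P < (w (m + 1)).length := by
    rw [hsplit, List.length_append, hr]; simp [hP]
  -- t P = 0
  have htP : t P = 0 := by
    rw [t_eq_s16 (m + 1) P hP_lt, hsplit, hr]
    rw [List.getD_eq_getElem?_getD, List.getElem?_append_right (le_refl P)]
    simp [hP]
  -- count of zeros below P is n
  have hcount0 : Nat.count (fun k => t k = 0) P = n := by
    rw [count_t_eq 0 (m + 1) P (le_of_lt hP_lt), hsplit,
      List.take_left' rfl, count0_sigmaL, List.length_take,
      min_eq_left (le_of_lt hn_lt)]
  -- count of 2's below n
  have hcount2 : Nat.count (fun k => t k = 2) n = (u.take n).count 2 := by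
    exact count_t_eq 2 m n (le_of_lt hn_lt)
  have hB : B n = P := by
    have := Nat.nth_count (p := fun k => t k = 0) htP
    rw [hcount0] at this
    exact this
  rw [hB, hcount2]
  exact hlenP

lemma count2_w (m : ℕ) : (w (m + 3)).count 2 = (w m).length := by
  show (w (m + 2 + 1)).count 2 = _
  rw [w_succ, count2_sigmaL _ (w_lt _), w_succ, count1_sigmaL, w_succ, count0_sigmaL]

lemma infinite_two : {k | t k = 2}.Infinite := by
  intro hf
  set c := hf.toFinset.card with hc
  have h1 : Nat.count (fun k => t k = 2) ((w (c + 3)).length) ≤ c :=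
    Nat.count_le_card hf _
  have h2 : Nat.count (fun k => t k = 2) ((w (c + 3)).length) = (w (c + 3)).count 2 := by
    rw [count_t_eq 2 (c + 3) _ le_rfl, List.take_length]
  have h3 := count2_w c
  have h4 := w_length c
  omega

/-- B(C(k)) = 2C(k) − k for all k ≥ 0. -/
theorem B_comp_C (k : ℕ) : B (C k) = 2 * C k - k := by
  have hinf : {k | t k = 2}.Infinite := infinite_two
  have hc : Nat.count (fun k => t k = 2) (C k) = k :=
    Nat.count_nth_of_infinite hinf k
  have hB := B_eq_s16 (C k)
  rw [hc] at hB
  omega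
end
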